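/- Define φ(Δ) = (a_0, a_1, ..., a_{m-1}) − ((Σ_j a_j)/m)·(1,...,1), where a_0 < ... < a_{m-1} are the m-generators of a bounded, co-bounded m-invariant set Δ. Then φ(Δ) lies in the Weyl chamber V^m = {x ∈ ℝ^m : Σ x_i = 0, x_0 ≤ x_1 ≤ ... ≤ x_{m-1}}, and φ commutes with the actions: for each letter i ∈ [m], φ(i · Δ) = i · φ(Δ), where i acts on V^m by adding m to the i-th coordinate, subtracting 1 from all coordinates, and re-sorting. -/

import Mathlib

/-- The shift of a set of integers: `Δ + k`. -/
def shiftSet (Δ : Set ℤ) (k : ℤ) : Set ℤ := (· + k) '' Δ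

/-- `Δ` is `k`-invariant if `Δ + k ⊆ Δ`. -/
def Invariant (k : ℤ) (Δ : Set ℤ) : Prop := shiftSet Δ k ⊆ Δ

/-- `Δ` is bounded (has a minimum element). -/
def HasMin (Δ : Set ℤ) : Prop := ∃ a ∈ Δ, ∀ x ∈ Δ, a ≤ x

/-- `Δ` is co-bounded: contains all sufficiently large integers. -/
def CoBounded (Δ : Set ℤ) : Prop := ∃ N : ℤ, ∀ x : ℤ, N ≤ x → x ∈ Δ

/-- The `k`-generators of `Δ`: elements `a ∈ Δ` with `a - k ∉ Δ`, i.e. `Δ \ (Δ + k)`. -/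
def gens (k : ℤ) (Δ : Set ℤ) : Set ℤ := Δ \ shiftSet Δ k

/-- The `(j+1)`-st smallest element of a set of integers. -/
noncomputable def nthSmallest : ℕ → Set ℤ → ℤ
  | 0, S => sInf S
  | j+1, S => nthSmallest j (S \ {sInf S})

/-- The letter `j ∈ [m]` acts on an `m`-invariant set by removing its `(j+1)`-st
smallest `m`-generator. -/
noncomputable def letterAct (m : ℤ) (j : ℕ) (Δ : Set ℤ) : Set ℤ :=
  Δ \ {nthSmallest j (gens m Δ)}

/-- `steps m p Δ i = p_{i-1} ⋯ p_1 p_0 ⋅ Δ`: the word acts one letter at a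
time, the letter `p 0` (rightmost) acting first. -/
noncomputable def steps (m : ℤ) (p : ℕ → ℕ) (Δ : Set ℤ) : ℕ → Set ℤ
  | 0 => Δ
  | i+1 => letterAct m (p i) (steps m p Δ i)
/-- The shift during the action of letter `i` on `ℝ^m`: add `m` to coordinate `i`
and subtract `1` from every coordinate. -/
def shiftVec (m : ℕ) (i : Fin m) (x : Fin m → ℝ) : Fin m → ℝ :=
  fun j => x j - 1 + if j = i then (m : ℝ) else 0

/-- Sort the coordinates of a vector into weakly increasing order. -/
noncomputable def sortVec {m : ℕ} (x : Fin m → ℝ) : Fin m → ℝ := x ∘ Tuple.sort x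

/-- The action of the letter `i ∈ [m]` on `V^m`: shift, then re-sort. -/
noncomputable def letterV (m : ℕ) (i : Fin m) (x : Fin m → ℝ) : Fin m → ℝ :=
  sortVec (shiftVec m i x)

/-- `stepsV m p x i = p_{i-1} ⋯ p_1 p_0 ⋅ x`: the word acts letter by letter, the
letter `p 0` (rightmost) acting first. -/
noncomputable def stepsV (m : ℕ) (p : ℕ → Fin m) (x : Fin m → ℝ) : ℕ → (Fin m → ℝ)
  | 0 => x
  | k+1 => letterV m (p k) (stepsV m p x k)

/-- Membership in the Weyl chamber `V^m`: coordinates sum to `0` and are weakly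
increasing. -/
def InV (m : ℕ) (x : Fin m → ℝ) : Prop := (∑ j, x j) = 0 ∧ Monotone x

/-- The Euclidean norm on `ℝ^m`. -/
noncomputable def eNorm {m : ℕ} (x : Fin m → ℝ) : ℝ := Real.sqrt (∑ j, (x j) ^ 2)

/-- The map `φ` sending a bounded co-bounded `m`-invariant set `Δ` with `m`-generators
`a_0 < … < a_{m-1}` to `(a_0, …, a_{m-1}) - (∑ a_j / m)·(1,…,1)`. -/
noncomputable def phi (m : ℕ) (Δ : Set ℤ) : Fin m → ℝ :=
  fun j => (nthSmallest j (gens m Δ) : ℝ) -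
    (∑ k : Fin m, (nthSmallest (k : ℕ) (gens m Δ) : ℝ)) / m

section Aux

lemma csInf_coe' (s : Finset ℤ) (hne : s.Nonempty) : sInf (↑s : Set ℤ) = s.min' hne := by
  refine IsLeast.csInf_eq ⟨by exact_mod_cast s.min'_mem hne,
    fun x hx => s.min'_le x (by exact_mod_cast hx)⟩

lemma nthSmallest_eq_orderEmbOfFin (j : ℕ) :
    ∀ {k : ℕ} (s : Finset ℤ) (h : s.card = k) (hj : j < k),
    nthSmallest j ↑s = s.orderEmbOfFin h ⟨j, hj⟩ := by
  induction j with
  | zero =>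
    intro k s h hj
    have hne : s.Nonempty := Finset.card_pos.mp (h ▸ hj)
    rw [show nthSmallest 0 ↑s = sInf (↑s : Set ℤ) from rfl, csInf_coe' s hne,
      Finset.orderEmbOfFin_zero h hj]
  | succ j ih =>
    intro k s h hj
    have hk : 0 < k := Nat.lt_of_le_of_lt (Nat.zero_le _) hj
    obtain ⟨k', rfl⟩ : ∃ k', k = k' + 1 := ⟨k - 1, (Nat.succ_pred_eq_of_pos hk).symm⟩
    have hne : s.Nonempty := Finset.card_pos.mp (h ▸ hk)
    have hmin : s.min' hne ∈ s := s.min'_mem hne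
    have h' : (s.erase (s.min' hne)).card = k' := by
      rw [Finset.card_erase_of_mem hmin, h]; rfl
    have hj' : j < k' := Nat.lt_of_succ_lt_succ hj
    have hstep : nthSmallest (j+1) ↑s = nthSmallest j ↑(s.erase (s.min' hne)) := by
      show nthSmallest j ((↑s : Set ℤ) \ {sInf ↑s}) = _
      rw [csInf_coe' s hne, Finset.coe_erase]
    rw [hstep, ih _ h' hj']
    have hzero : s.orderEmbOfFin h ⟨0, hk⟩ = s.min' hne := Finset.orderEmbOfFin_zero h hk
    have hf : (fun x : Fin k' => s.orderEmbOfFin h x.succ)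
        = (s.erase (s.min' hne)).orderEmbOfFin h' := by
      refine Finset.orderEmbOfFin_unique h' (fun x => ?_) ?_
      · refine Finset.mem_erase.mpr ⟨?_, Finset.orderEmbOfFin_mem s h x.succ⟩
        rw [← hzero]
        intro hcon
        exact (Fin.succ_ne_zero x) ((s.orderEmbOfFin h).injective hcon)
      · exact (s.orderEmbOfFin h).strictMono.comp (Fin.strictMono_succ)
    have := congrFun hf ⟨j, hj'⟩
    rw [← this]
    rfl

lemma mem_shiftSet' {Δ : Set ℤ} {k x : ℤ} : x ∈ shiftSet Δ k ↔ x - k ∈ Δ := by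
  constructor
  · rintro ⟨y, hy, rfl⟩; simpa using hy
  · intro h; exact ⟨x - k, h, by ring⟩

lemma mem_gens' {Δ : Set ℤ} {k x : ℤ} : x ∈ gens k Δ ↔ x ∈ Δ ∧ x - k ∉ Δ := by
  unfold gens; rw [Set.mem_diff, mem_shiftSet']

lemma inv_iter {m : ℤ} {Δ : Set ℤ} (hI : Invariant m Δ) {a : ℤ} (ha : a ∈ Δ) (k : ℕ) :
    a + m * k ∈ Δ := by
  induction k with
  | zero => simpa using ha
  | succ n ihn =>
    have : (a + m * n) + m ∈ Δ := hI ⟨a + m * n, ihn, rfl⟩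
    convert this using 1; push_cast; ring

lemma gens_finite {m : ℕ} (hm : 0 < m) {Δ : Set ℤ} (hb : HasMin Δ) (hc : CoBounded Δ) :
    (gens (m : ℤ) Δ).Finite := by
  obtain ⟨a, ha, hmin⟩ := hb
  obtain ⟨N, hN⟩ := hc
  refine Set.Finite.subset (Set.finite_Icc a (N + m)) ?_
  intro x hx
  rw [mem_gens'] at hx
  refine Set.mem_Icc.mpr ⟨hmin x hx.1, ?_⟩
  by_contra hcon
  push_neg at hcon
  exact hx.2 (hN _ (by omega))

lemma gens_card {m : ℕ} (hm : 0 < m) {Δ : Set ℤ} (hI : Invariant (m : ℤ) Δ)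
    (hb : HasMin Δ) (hc : CoBounded Δ) :
    ((gens_finite hm hb hc (Δ := Δ)).toFinset).card = m := by
  haveI : NeZero m := ⟨hm.ne'⟩
  have : ((gens_finite hm hb hc (Δ := Δ)).toFinset).card = Fintype.card (ZMod m) := by
    refine Finset.card_bij (fun x _ => (x : ZMod m)) (fun _ _ => Finset.mem_univ _) ?_ ?_
    · -- injective
      intro x hx y hy hxy
      simp only [Set.Finite.mem_toFinset] at hx hy
      rw [mem_gens'] at hx hy
      have hd : (m : ℤ) ∣ y - x := by
        have hxy' : ((x : ℤ) : ZMod m) = ((y : ℤ) : ZMod m) := hxy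
        have h0 : ((y - x : ℤ) : ZMod m) = 0 := by push_cast; rw [hxy']; ring
        exact (ZMod.intCast_zmod_eq_zero_iff_dvd _ m).mp h0
      rcases hd with ⟨c, hc'⟩
      rcases lt_trichotomy c 0 with h0 | h0 | h0
      · exfalso
        obtain ⟨k, hk⟩ : ∃ k : ℕ, (-c - 1 : ℤ) = k := ⟨(-c-1).toNat, by omega⟩
        have := inv_iter hI hy.1 k
        rw [← hk] at this
        exact absurd (by convert this using 1; linarith [hc']) hx.2
      · subst h0; simp at hc'; omega
      · exfalso
        obtain ⟨k, hk⟩ : ∃ k : ℕ, (c - 1 : ℤ) = k := ⟨(c-1).toNat, by omega⟩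
        have := inv_iter hI hx.1 k
        rw [← hk] at this
        exact absurd (by convert this using 1; linarith [hc']) hy.2
    · -- surjective
      intro r _
      obtain ⟨a, ha, hamin⟩ := hb
      obtain ⟨N, hN⟩ := hc
      set C : Set ℤ := {x | x ∈ Δ ∧ (x : ZMod m) = r} with hC
      have hCne : C.Nonempty := by
        refine ⟨N + ((r - (N : ℤ) : ZMod m)).val, ⟨hN _ (by omega), ?_⟩⟩
        have hv : (((r - (N : ℤ) : ZMod m)).val : ZMod m) = r - (N : ℤ) := by
          simp [ZMod.natCast_val, ZMod.cast_id]
        push_cast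
        rw [hv]; ring
      have hCbdd : BddBelow C := ⟨a, fun x hx => hamin x hx.1⟩
      have hμC : sInf C ∈ C := Int.csInf_mem hCne hCbdd
      have hgen : sInf C ∈ gens (m : ℤ) Δ := by
        rw [mem_gens']
        refine ⟨hμC.1, fun hcon => ?_⟩
        have hmem : sInf C - m ∈ C := by
          refine ⟨hcon, ?_⟩
          have hcast : ((sInf C - m : ℤ) : ZMod m) = ((sInf C : ℤ) : ZMod m) := by
            push_cast; simp
          rw [hcast, hμC.2]
        have := csInf_le hCbdd hmem
        omega
      exact ⟨sInf C, (Set.Finite.mem_toFinset _).mpr hgen, hμC.2⟩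
  rw [this, ZMod.card]

/-- Sum of a strictly increasing enumeration of a finset equals the sum of the finset. -/
lemma sum_orderEmbOfFin (s : Finset ℤ) {k : ℕ} (h : s.card = k) :
    ∑ j : Fin k, (s.orderEmbOfFin h j : ℤ) = ∑ x ∈ s, x := by
  have himg : Finset.image (s.orderEmbOfFin h) Finset.univ = s := by
    apply Finset.coe_injective
    rw [Finset.coe_image, Finset.coe_univ, Set.image_univ, Finset.range_orderEmbOfFin]
  conv_rhs => rw [← himg]
  rw [Finset.sum_image (fun a _ b _ hab => (s.orderEmbOfFin h).injective hab)]

/-- Two strictly monotone maps `Fin k → ℝ` with values in a finset of cardinality `k`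
coincide. -/
lemma strictMono_eq_of_mem (t : Finset ℝ) {k : ℕ} (h : t.card = k) {f g : Fin k → ℝ}
    (hf : StrictMono f) (hg : StrictMono g) (hft : ∀ j, f j ∈ t) (hgt : ∀ j, g j ∈ t) :
    f = g := by
  rw [Finset.orderEmbOfFin_unique h hft hf, Finset.orderEmbOfFin_unique h hgt hg]

end Aux

/-- `φ(Δ)` lies in the Weyl chamber `V^m`, and `φ` intertwines the letter action on
invariant sets with the letter action on `V^m`. -/
theorem phi_mem_and_equivariant (m : ℕ) (hm : 0 < m) (Δ : Set ℤ)
    (hI : Invariant m Δ) (hb : HasMin Δ) (hc : CoBounded Δ) :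
    InV m (phi m Δ) ∧
    ∀ i : Fin m, phi m (letterAct m (i : ℕ) Δ) = letterV m i (phi m Δ) := by
  have hfin : (gens (m : ℤ) Δ).Finite := gens_finite hm hb hc
  set s : Finset ℤ := hfin.toFinset with hs
  have hcoe : (↑s : Set ℤ) = gens (m : ℤ) Δ := hfin.coe_toFinset
  have hcard : s.card = m := gens_card hm hI hb hc
  have hm' : (m : ℝ) ≠ 0 := Nat.cast_ne_zero.mpr hm.ne'
  have hA : ∀ j : Fin m, nthSmallest (j : ℕ) (gens (m : ℤ) Δ) = s.orderEmbOfFin hcard j := by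
    intro j
    rw [← hcoe, nthSmallest_eq_orderEmbOfFin (j : ℕ) s hcard j.isLt]
  set S : ℝ := ∑ j : Fin m, ((s.orderEmbOfFin hcard j : ℤ) : ℝ) with hSdef
  have hphi : phi m Δ = fun j => ((s.orderEmbOfFin hcard j : ℤ) : ℝ) - S / m := by
    funext j
    simp only [phi, hA, hSdef]
  have hEsm : StrictMono (fun j : Fin m => ((s.orderEmbOfFin hcard j : ℤ) : ℝ)) :=
    fun j k h => Int.cast_lt.mpr ((s.orderEmbOfFin hcard).strictMono h)
  constructor
  · constructor
    · rw [hphi]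
      rw [Finset.sum_sub_distrib, Finset.sum_const, Finset.card_univ, Fintype.card_fin,
        nsmul_eq_mul, mul_div_cancel₀ _ hm', ← hSdef, sub_self]
    · rw [hphi]
      exact fun j k h => by simpa using sub_le_sub_right (hEsm.monotone h) (S / m)
  · intro i
    set ai : ℤ := s.orderEmbOfFin hcard i with hai
    have hais : ai ∈ s := Finset.orderEmbOfFin_mem s hcard i
    have haiG : ai ∈ gens (m : ℤ) Δ := by rw [← hcoe]; exact_mod_cast hais
    rw [mem_gens'] at haiG
    obtain ⟨haiΔ, haim⟩ := haiG
    have haipm : ai + m ∈ Δ := hI ⟨ai, haiΔ, rfl⟩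
    have hapm_not : ai + m ∉ s := by
      intro hcon
      have : ai + m ∈ gens (m : ℤ) Δ := by rw [← hcoe]; exact_mod_cast hcon
      rw [mem_gens'] at this
      exact this.2 (by simpa using haiΔ)
    have hΔ' : letterAct (m : ℤ) (i : ℕ) Δ = Δ \ {ai} := by
      unfold letterAct
      rw [hA i]
    have hmpos : (0 : ℤ) < (m : ℤ) := by exact_mod_cast hm
    have hG' : gens (m : ℤ) (letterAct (m : ℤ) (i : ℕ) Δ)
        = insert (ai + m) ((gens (m : ℤ) Δ) \ {ai}) := by
      rw [hΔ']
      ext x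
      simp only [mem_gens', Set.mem_diff, Set.mem_singleton_iff, Set.mem_insert_iff]
      constructor
      · rintro ⟨⟨hxΔ, hxne⟩, h2⟩
        by_cases hxm : x - m = ai
        · left; omega
        · right
          exact ⟨⟨hxΔ, fun hin => h2 ⟨hin, hxm⟩⟩, hxne⟩
      · rintro (rfl | ⟨⟨hxΔ, hxg⟩, hxne⟩)
        · refine ⟨⟨haipm, by omega⟩, ?_⟩
          rintro ⟨h1, h2⟩
          exact h2 (by omega)
        · exact ⟨⟨hxΔ, hxne⟩, fun h => hxg h.1⟩
    set s' : Finset ℤ := insert (ai + m) (s.erase ai) with hs'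
    have hcoe' : (↑s' : Set ℤ) = gens (m : ℤ) (letterAct (m : ℤ) (i : ℕ) Δ) := by
      rw [hG', hs', Finset.coe_insert, Finset.coe_erase, hcoe]
    have hcard' : s'.card = m := by
      rw [hs', Finset.card_insert_of_notMem (fun h => hapm_not (Finset.mem_of_mem_erase h)),
        Finset.card_erase_of_mem hais, hcard]
      omega
    have hA' : ∀ j : Fin m, nthSmallest (j : ℕ) (gens (m : ℤ) (letterAct (m : ℤ) (i : ℕ) Δ))
        = s'.orderEmbOfFin hcard' j := by
      intro j
      rw [← hcoe', nthSmallest_eq_orderEmbOfFin (j : ℕ) s' hcard' j.isLt]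
    set b : Fin m → ℤ := fun j => s.orderEmbOfFin hcard j + if j = i then (m : ℤ) else 0
      with hb
    have hbmem : ∀ j, b j ∈ s' := by
      intro j
      by_cases hji : j = i
      · subst hji; simp [hb, hs', hai]
      · simp only [hb, hji, if_neg, ite_false, add_zero]
        refine Finset.mem_insert_of_mem (Finset.mem_erase.mpr ⟨?_,
          Finset.orderEmbOfFin_mem s hcard j⟩)
        exact fun h => hji ((s.orderEmbOfFin hcard).injective h)
    have hbinj : Function.Injective b := by
      intro j k hjk
      by_cases hji : j = i <;> by_cases hki : k = i
      · rw [hji, hki]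
      · exfalso
        subst hji
        simp only [hb, if_pos rfl, if_neg hki, add_zero] at hjk
        exact hapm_not (hjk ▸ Finset.orderEmbOfFin_mem s hcard k)
      · exfalso
        subst hki
        simp only [hb, if_pos rfl, if_neg hji, add_zero] at hjk
        exact hapm_not (hjk ▸ Finset.orderEmbOfFin_mem s hcard j)
      · simp only [hb, if_neg hji, if_neg hki, add_zero] at hjk
        exact (s.orderEmbOfFin hcard).injective hjk
    have himg_b : Finset.image b Finset.univ = s' := by
      refine Finset.eq_of_subset_of_card_le (fun x hx => ?_) ?_
      · obtain ⟨j, _, rfl⟩ := Finset.mem_image.mp hx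
        exact hbmem j
      · rw [Finset.card_image_of_injective _ hbinj, Finset.card_univ, Fintype.card_fin, hcard']
    set S' : ℝ := ∑ j : Fin m, ((s'.orderEmbOfFin hcard' j : ℤ) : ℝ) with hS'def
    have hsumZ : (∑ j : Fin m, (s'.orderEmbOfFin hcard' j : ℤ))
        = (∑ j : Fin m, (s.orderEmbOfFin hcard j : ℤ)) + m := by
      rw [show (∑ j : Fin m, (s'.orderEmbOfFin hcard' j : ℤ)) = ∑ x ∈ s', x from
        sum_orderEmbOfFin s' hcard']
      rw [← himg_b, Finset.sum_image (fun a _ c _ hac => hbinj hac)]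
      simp only [hb]
      rw [Finset.sum_add_distrib, Finset.sum_ite_eq' Finset.univ i (fun _ => (m : ℤ))]
      simp
    have hS' : S' = S + m := by
      rw [hS'def, hSdef, ← Int.cast_sum, ← Int.cast_sum, hsumZ]
      push_cast
      ring
    set t : Finset ℝ := Finset.image (fun x : ℤ => ((x : ℝ) - S' / m)) s' with ht
    have hmapinj : Function.Injective (fun x : ℤ => ((x : ℝ) - S' / m)) := by
      intro x y hxy
      simp only [sub_left_inj] at hxy
      exact_mod_cast hxy
    have hct : t.card = m := by
      rw [ht, Finset.card_image_of_injective _ hmapinj, hcard']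
    have hphi' : phi m (letterAct (m : ℤ) (i : ℕ) Δ)
        = fun j => ((s'.orderEmbOfFin hcard' j : ℤ) : ℝ) - S' / m := by
      funext j
      simp only [phi, hA', hS'def]
    have hf1sm : StrictMono (fun j : Fin m => ((s'.orderEmbOfFin hcard' j : ℤ) : ℝ) - S' / m) := by
      intro j k h
      have : ((s'.orderEmbOfFin hcard' j : ℤ) : ℝ) < ((s'.orderEmbOfFin hcard' k : ℤ) : ℝ) := by
        exact_mod_cast (s'.orderEmbOfFin hcard').strictMono h
      linarith
    have hf1mem : ∀ j, ((s'.orderEmbOfFin hcard' j : ℤ) : ℝ) - S' / m ∈ t := fun j =>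
      Finset.mem_image_of_mem _ (Finset.orderEmbOfFin_mem s' hcard' j)
    set c : Fin m → ℝ := shiftVec m i (phi m Δ) with hcdef
    have hcb : c = fun j => ((b j : ℤ) : ℝ) - S' / m := by
      funext j
      simp only [hcdef, shiftVec, hphi, hb, hS']
      by_cases hji : j = i
      · simp only [hji, if_pos rfl, if_true]
        push_cast
        field_simp
        ring
      · simp only [hji, ite_false, if_neg hji, add_zero]
        push_cast
        field_simp
        ring
    have hcinj : Function.Injective c := by
      rw [hcb]
      intro j k hjk
      simp only [sub_left_inj] at hjk
      exact hbinj (by exact_mod_cast hjk)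
    have hsortsm : StrictMono (sortVec c) := by
      refine (Tuple.monotone_sort c).strictMono_of_injective ?_
      exact Function.Injective.comp hcinj (Equiv.injective _)
    have hsortmem : ∀ j, sortVec c j ∈ t := by
      intro j
      show c (Tuple.sort c j) ∈ t
      rw [hcb]
      exact Finset.mem_image_of_mem _ (hbmem _)
    have : phi m (letterAct (m : ℤ) (i : ℕ) Δ) = sortVec c := by
      rw [hphi']
      exact strictMono_eq_of_mem t hct hf1sm hsortsm hf1mem hsortmem
    rw [this]
    rfl
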